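/- Let Ω = {(x₁,x₂) ∈ ℝ² : x₁² + x₂² < 1 and x₂ < |x₁|}. Let U ⊆ ℝ² be any open neighbourhood of cl(Ω) and let 0 ≤ L < √2. Then there is no map r : U → ℝ² such that r(U) ⊆ cl(Ω), r(x) = x for all x ∈ cl(Ω), and r is Lipschitz with constant L (with respect to the Euclidean metric). -/

import Mathlib

open Metric Set

/-- Explicit point of the Euclidean plane. -/
noncomputable def pt (a b : ℝ) : EuclideanSpace ℝ (Fin 2) := (WithLp.equiv 2 (Fin 2 → ℝ)).symm ![a, b]

@[simp] lemma pt_apply_zero (a b : ℝ) : pt a b 0 = a := rfl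
@[simp] lemma pt_apply_one (a b : ℝ) : pt a b 1 = b := rfl

lemma euclid_dist2 (a b c d : ℝ) :
    dist (pt a b) (pt c d) = Real.sqrt ((a - c)^2 + (b - d)^2) := by
  rw [EuclideanSpace.dist_eq, Fin.sum_univ_two]
  simp [Real.dist_eq, sq_abs]

lemma euclid_norm_sub2 (a b c d : ℝ) :
    ‖pt a b - pt c d‖ = Real.sqrt ((a - c)^2 + (b - d)^2) := by
  rw [← dist_eq_norm, euclid_dist2]

lemma euclid_zero_eq : (0 : EuclideanSpace ℝ (Fin 2)) = pt 0 0 := by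
  ext i
  fin_cases i <;> rfl

theorem no_lipschitz_retraction
    (Ω : Set (EuclideanSpace ℝ (Fin 2)))
    (hΩ : Ω = {x : EuclideanSpace ℝ (Fin 2) | (x 0) ^ 2 + (x 1) ^ 2 < 1 ∧ x 1 < |x 0|})
    (U : Set (EuclideanSpace ℝ (Fin 2))) (hU : IsOpen U) (hUΩ : closure Ω ⊆ U)
    (L : ℝ) (hL0 : 0 ≤ L) (hL : L < Real.sqrt 2) :
    ¬ ∃ r : EuclideanSpace ℝ (Fin 2) → EuclideanSpace ℝ (Fin 2),
      (∀ x ∈ U, r x ∈ closure Ω) ∧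
      (∀ x ∈ closure Ω, r x = x) ∧
      (∀ x ∈ U, ∀ y ∈ U, ‖r x - r y‖ ≤ L * ‖x - y‖) := by
  rintro ⟨r, hrU, hrid, hlip⟩
  -- closure Ω is contained in the closed set {x | x 1 ≤ |x 0|}
  have hS : IsClosed {x : EuclideanSpace ℝ (Fin 2) | x 1 ≤ |x 0|} :=
    isClosed_le (EuclideanSpace.proj (1 : Fin 2)).continuous
      ((EuclideanSpace.proj (0 : Fin 2)).continuous.abs)
  have hclS : closure Ω ⊆ {x : EuclideanSpace ℝ (Fin 2) | x 1 ≤ |x 0|} := by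
    apply closure_minimal _ hS
    rw [hΩ]; intro x hx; exact le_of_lt hx.2
  -- corner points of the cusp are in the closure
  have hmem : ∀ u : ℝ, 0 < |u| → |u| ≤ 1/2 → pt u |u| ∈ closure Ω := by
    intro u h1 h2
    rw [Metric.mem_closure_iff]
    intro ε hε
    set η := min (ε/2) |u| with hη
    have hη0 : 0 < η := lt_min (by linarith) h1
    have hηu : η ≤ |u| := min_le_right _ _
    refine ⟨pt u (|u| - η), ?_, ?_⟩
    · rw [hΩ]
      constructor
      · have h3 : (0:ℝ) ≤ |u| - η := by linarith
        have h4 : u ^ 2 = |u| ^ 2 := (sq_abs u).symm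
        simp only [pt_apply_zero, pt_apply_one]
        nlinarith
      · simp only [pt_apply_zero, pt_apply_one]
        linarith
    · rw [euclid_dist2]
      have heq : Real.sqrt ((u - u)^2 + (|u| - (|u| - η))^2) = η := by
        have : (u - u)^2 + (|u| - (|u| - η))^2 = η^2 := by ring
        rw [this, Real.sqrt_sq hη0.le]
      rw [heq]
      have : η ≤ ε/2 := min_le_left _ _
      linarith
  -- the origin is in the closure, hence in U
  have h0mem : (0 : EuclideanSpace ℝ (Fin 2)) ∈ closure Ω := by
    rw [Metric.mem_closure_iff]
    intro ε hε
    set η := min (ε/2) (1/2) with hη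
    have hη0 : 0 < η := lt_min (by linarith) (by norm_num)
    have hη2 : η ≤ 1/2 := min_le_right _ _
    refine ⟨pt η 0, ?_, ?_⟩
    · rw [hΩ]
      constructor
      · simp only [pt_apply_zero, pt_apply_one]
        nlinarith
      · simp only [pt_apply_zero, pt_apply_one]
        rw [abs_of_pos hη0]; exact hη0
    · rw [euclid_zero_eq, euclid_dist2]
      have heq : Real.sqrt ((0 - η)^2 + ((0:ℝ) - 0)^2) = η := by
        have : (0 - η)^2 + ((0:ℝ) - 0)^2 = η^2 := by ring
        rw [this, Real.sqrt_sq hη0.le]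
      rw [heq]
      have : η ≤ ε/2 := min_le_left _ _
      linarith
  -- choose δ
  obtain ⟨ρ, hρ0, hρ⟩ := Metric.isOpen_iff.mp hU 0 (hUΩ h0mem)
  set δ := min (ρ/2) (1/2) with hδdef
  have hδ0 : 0 < δ := lt_min (by linarith) (by norm_num)
  have hδρ : δ < ρ := lt_of_le_of_lt (min_le_left _ _) (by linarith)
  have hδ2 : δ ≤ 1/2 := min_le_right _ _
  -- corner points
  have haδ : |(-δ)| = δ := by rw [abs_neg, abs_of_pos hδ0]
  have hbδ : |δ| = δ := abs_of_pos hδ0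
  have ha : pt (-δ) δ ∈ closure Ω := by
    have := hmem (-δ) (by rw [haδ]; exact hδ0) (by rw [haδ]; exact hδ2)
    rwa [haδ] at this
  have hb : pt δ δ ∈ closure Ω := by
    have := hmem δ (by rw [hbδ]; exact hδ0) (by rw [hbδ]; exact hδ2)
    rwa [hbδ] at this
  have hz : pt 0 δ ∈ U := by
    apply hρ
    rw [Metric.mem_ball, euclid_zero_eq, euclid_dist2]
    have heq : Real.sqrt ((0 - 0)^2 + (δ - 0)^2) = δ := by
      have : ((0:ℝ) - 0)^2 + (δ - 0)^2 = δ^2 := by ring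
      rw [this, Real.sqrt_sq hδ0.le]
    rw [heq]; exact hδρ
  -- the image point
  set w := r (pt 0 δ) with hw
  have hwcl : w ∈ closure Ω := hrU _ hz
  have hwS : w 1 ≤ |w 0| := hclS hwcl
  have hwfun : w = pt (w 0) (w 1) := by ext i; fin_cases i <;> rfl
  -- Lipschitz bounds to the two corners
  have key : ∀ u : ℝ, |u| = δ → pt u δ ∈ closure Ω → ‖w - pt u δ‖ ≤ L * δ := by
    intro u hu hcl
    have h1 : ‖r (pt 0 δ) - r (pt u δ)‖ ≤ L * ‖pt 0 δ - pt u δ‖ :=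
      hlip _ hz _ (hUΩ hcl)
    rw [hrid _ hcl] at h1
    have h2 : ‖pt 0 δ - pt u δ‖ = δ := by
      rw [euclid_norm_sub2]
      have h3 : (0 - u)^2 + (δ - δ)^2 = δ^2 := by
        have : u^2 = δ^2 := by rw [← sq_abs u, hu]
        nlinarith
      rw [h3, Real.sqrt_sq hδ0.le]
    rw [h2] at h1
    exact h1
  -- distance from w to corners
  have hdist : ∀ u : ℝ, ‖w - pt u δ‖ = Real.sqrt ((w 0 - u)^2 + (w 1 - δ)^2) := by
    intro u
    conv_lhs => rw [hwfun]
    rw [euclid_norm_sub2]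
  -- final contradiction
  have hfin : Real.sqrt 2 * δ ≤ L * δ := by
    rcases le_total 0 (w 0) with hc | hc
    · have hwle : w 1 ≤ w 0 := by rwa [abs_of_nonneg hc] at hwS
      have h1 : ‖w - pt (-δ) δ‖ ≤ L * δ := key (-δ) haδ ha
      have h2 : Real.sqrt 2 * δ ≤ ‖w - pt (-δ) δ‖ := by
        rw [hdist]
        have h3 : (Real.sqrt 2 * δ)^2 ≤ (w 0 - (-δ))^2 + (w 1 - δ)^2 := by
          have h4 : (Real.sqrt 2 * δ)^2 = 2 * δ^2 := by
            rw [mul_pow, Real.sq_sqrt (by norm_num : (2:ℝ) ≥ 0)]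
          rw [h4]
          nlinarith [sq_nonneg (w 0), sq_nonneg (w 1),
            mul_nonneg hδ0.le (sub_nonneg.2 hwle)]
        calc Real.sqrt 2 * δ = Real.sqrt ((Real.sqrt 2 * δ)^2) := by
              rw [Real.sqrt_sq (by positivity)]
          _ ≤ _ := Real.sqrt_le_sqrt h3
      linarith
    · have hwle : w 1 ≤ -(w 0) := by rwa [abs_of_nonpos hc] at hwS
      have h1 : ‖w - pt δ δ‖ ≤ L * δ := key δ hbδ hb
      have h2 : Real.sqrt 2 * δ ≤ ‖w - pt δ δ‖ := by
        rw [hdist]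
        have h3 : (Real.sqrt 2 * δ)^2 ≤ (w 0 - δ)^2 + (w 1 - δ)^2 := by
          have h4 : (Real.sqrt 2 * δ)^2 = 2 * δ^2 := by
            rw [mul_pow, Real.sq_sqrt (by norm_num : (2:ℝ) ≥ 0)]
          rw [h4]
          nlinarith [sq_nonneg (w 0), sq_nonneg (w 1),
            mul_nonneg hδ0.le (by linarith : (0:ℝ) ≤ -(w 0 + w 1))]
        calc Real.sqrt 2 * δ = Real.sqrt ((Real.sqrt 2 * δ)^2) := by
              rw [Real.sqrt_sq (by positivity)]
          _ ≤ _ := Real.sqrt_le_sqrt h3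
      linarith
  have : Real.sqrt 2 ≤ L := le_of_mul_le_mul_right (by linarith [hfin]) hδ0
  linarith
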